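/- Let X = {x_n}_{n ∈ ℤ/Nℤ} be a tight frame for ℂ^d. If ℤ/Nℤ defines a frame multiplication for X, i.e., there exists a bilinear map ∗ : ℂ^d × ℂ^d → ℂ^d with x_m ∗ x_n = x_{m+n} for all m, n ∈ ℤ/Nℤ, then X is unitarily equivalent to a DFT frame: there exist a unitary operator U on ℂ^d, a constant c > 0, and an injective map s : ℤ/dℤ → ℤ/Nℤ such that cU(x_m) = (e^{2πi m s(0)/N}, …, e^{2πi m s(d-1)/N}) for every m ∈ ℤ/Nℤ. -/

import Mathlib

open scoped ComplexInnerProductSpace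

noncomputable def zchar (N : ℕ) (a : ZMod N) : ℂ :=
  Complex.exp (2 * Real.pi * Complex.I * (a.val : ℂ) / (N : ℂ))

lemma zchar_conj (N : ℕ) [NeZero N] (a : ZMod N) :
    (starRingEnd ℂ) (zchar N a) = Complex.exp (-(2 * Real.pi * Complex.I * (a.val : ℂ) / (N : ℂ))) := by
  rw [zchar, ← Complex.exp_conj]
  congr 1
  rw [map_div₀, Complex.conj_natCast, ← neg_div]
  congr 1
  rw [show ((2 : ℂ) * Real.pi * Complex.I * (a.val : ℂ)) = ((2 * Real.pi * (a.val : ℝ) : ℝ) : ℂ) * Complex.I by push_cast; ring]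
  rw [map_mul, Complex.conj_ofReal, Complex.conj_I]
  push_cast
  ring

lemma zchar_nat (N : ℕ) [NeZero N] (n : ℕ) :
    Complex.exp (2 * Real.pi * Complex.I * (n : ℂ) / (N : ℂ)) = zchar N (n : ZMod N) := by
  have hN : (N : ℂ) ≠ 0 := by exact_mod_cast (NeZero.ne N)
  have h : n = N * (n / N) + (n : ZMod N).val := by
    rw [ZMod.val_natCast]; exact (Nat.div_add_mod n N).symm
  rw [zchar]
  have : (n : ℂ) = (N : ℂ) * ((n / N : ℕ) : ℂ) + ((n : ZMod N).val : ℂ) := by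
    exact_mod_cast congrArg (Nat.cast : ℕ → ℂ) h
  rw [this]
  rw [show 2 * Real.pi * Complex.I * ((N : ℂ) * ((n / N : ℕ) : ℂ) + ((n : ZMod N).val : ℂ)) / N
      = ((n / N : ℕ) : ℂ) * (2 * Real.pi * Complex.I) + 2 * Real.pi * Complex.I * ((n : ZMod N).val : ℂ) / N by
    field_simp]
  rw [Complex.exp_add, Complex.exp_nat_mul_two_pi_mul_I, one_mul]

lemma zchar_ne_one (N : ℕ) [NeZero N] {a : ZMod N} (ha : a ≠ 0) : zchar N a ≠ 1 := by
  intro h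
  rw [zchar, Complex.exp_eq_one_iff] at h
  obtain ⟨k, hk⟩ := h
  have hN : (N : ℂ) ≠ 0 := by exact_mod_cast (NeZero.ne N)
  have h2πI : (2 * (Real.pi:ℂ) * Complex.I : ℂ) ≠ 0 := by
    simp [Complex.I_ne_zero, Real.pi_ne_zero, Complex.ofReal_ne_zero]
  rw [div_eq_iff hN] at hk
  have hval : (a.val : ℂ) = (k : ℂ) * (N : ℂ) := by
    apply mul_left_cancel₀ h2πI
    linear_combination hk
  have hz : (a.val : ℤ) = k * N := by exact_mod_cast hval
  have h1 : (0:ℤ) < a.val := by exact_mod_cast ZMod.val_pos.mpr ha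
  have h2 : (a.val : ℤ) < N := by exact_mod_cast ZMod.val_lt a
  have hN' : (0:ℤ) < N := by exact_mod_cast Nat.pos_of_ne_zero (NeZero.ne N)
  have hklt : k < 1 := by
    by_contra hge
    push_neg at hge
    nlinarith
  have hkle : k ≤ 0 := by omega
  nlinarith

lemma zchar_zero (N : ℕ) [NeZero N] : zchar N 0 = 1 := by simp [zchar]

lemma zchar_ne_zero (N : ℕ) [NeZero N] (a : ZMod N) : zchar N a ≠ 0 := Complex.exp_ne_zero _

lemma zchar_add (N : ℕ) [NeZero N] (a b : ZMod N) :
    zchar N (a + b) = zchar N a * zchar N b := by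
  have h1 : ((a.val + b.val : ℕ) : ZMod N) = a + b := by push_cast [ZMod.natCast_val, ZMod.cast_id]; ring
  rw [← h1, ← zchar_nat]
  rw [zchar, zchar, ← Complex.exp_add]
  congr 1
  push_cast
  ring

lemma zchar_neg (N : ℕ) [NeZero N] (a : ZMod N) :
    zchar N (-a) = (starRingEnd ℂ) (zchar N a) := by
  have h1 : zchar N (-a) * zchar N a = 1 := by
    rw [← zchar_add]; simp [zchar_zero]
  have h2 : (starRingEnd ℂ) (zchar N a) * zchar N a = 1 := by
    rw [zchar_conj, zchar, ← Complex.exp_add]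
    simp
  exact mul_right_cancel₀ (zchar_ne_zero N a) (h1.trans h2.symm)

lemma zchar_norm (N : ℕ) [NeZero N] (a : ZMod N) : ‖zchar N a‖ = 1 := by
  rw [zchar, show (2 * Real.pi * Complex.I * (a.val : ℂ) / (N : ℂ))
      = ((2 * Real.pi * (a.val : ℝ) / (N : ℝ) : ℝ) : ℂ) * Complex.I by push_cast; ring,
    Complex.norm_exp_ofReal_mul_I]

lemma zchar_sum (N : ℕ) [NeZero N] {c : ZMod N} (hc : c ≠ 0) :
    ∑ k : ZMod N, zchar N (c * k) = 0 := by
  have key : ∑ k : ZMod N, zchar N (c * (k + 1)) = ∑ k : ZMod N, zchar N (c * k) :=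
    Fintype.sum_equiv (Equiv.addRight (1 : ZMod N)) _ _ (fun k => rfl)
  have h2 : ∑ k : ZMod N, zchar N (c * (k + 1)) = (∑ k : ZMod N, zchar N (c * k)) * zchar N c := by
    rw [Finset.sum_mul]
    refine Finset.sum_congr rfl fun k _ => ?_
    rw [← zchar_add]; ring_nf
  have h3 : (∑ k : ZMod N, zchar N (c * k)) * (zchar N c - 1) = 0 := by
    rw [mul_sub, mul_one, sub_eq_zero, ← h2, key]
  rcases mul_eq_zero.mp h3 with h | h
  · exact h
  · exact absurd (by linear_combination h) (zchar_ne_one N hc)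

/-- Let `X = {x_n}_{n ∈ ℤ/Nℤ}` be a tight frame for `ℂ^d`.  If `ℤ/Nℤ` defines
a frame multiplication for `X` (a bilinear `∗` with `x_m ∗ x_n = x_{m+n}`), then `X` is
unitarily equivalent to a DFT frame: there are a unitary `U`, a constant `c > 0`, and an
injective `s : ℤ/dℤ → ℤ/Nℤ` (here realized as an injection of the `d` coordinates into
`ℤ/Nℤ`) with `cU(x_m) = (e^{2πi m s(0)/N}, …, e^{2πi m s(d-1)/N})` for all `m`. -/
theorem stmt_17 (N d : ℕ) [NeZero N]
    (x : ZMod N → EuclideanSpace ℂ (Fin d))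
    (htight : ∃ A : ℝ, 0 < A ∧
      ∀ v : EuclideanSpace ℂ (Fin d), ∑ n, ‖⟪x n, v⟫‖ ^ 2 = A * ‖v‖ ^ 2)
    (m : EuclideanSpace ℂ (Fin d) →ₗ[ℂ]
      EuclideanSpace ℂ (Fin d) →ₗ[ℂ] EuclideanSpace ℂ (Fin d))
    (hm : ∀ a b : ZMod N, m (x a) (x b) = x (a + b)) :
    ∃ (U : EuclideanSpace ℂ (Fin d) ≃ₗᵢ[ℂ] EuclideanSpace ℂ (Fin d)) (c : ℝ)
      (s : Fin d → ZMod N),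
      0 < c ∧ Function.Injective s ∧
      ∀ (a : ZMod N) (j : Fin d),
        ((c : ℂ) • U (x a)) j =
          Complex.exp (2 * Real.pi * Complex.I * (a.val : ℂ) * ((s j).val : ℂ) / (N : ℂ)) := by
  classical
  obtain ⟨A, hA, ht⟩ := htight
  have hN : (0:ℝ) < N := by exact_mod_cast Nat.pos_of_ne_zero (NeZero.ne N)
  have hNc : (N : ℂ) ≠ 0 := by exact_mod_cast NeZero.ne N
  have hA' : (A : ℂ) ≠ 0 := by exact_mod_cast hA.ne'
  -- Step 1 : frame operator is A • id
  have hS : ∀ w : EuclideanSpace ℂ (Fin d), ∑ n, ⟪x n, w⟫ • x n = (A : ℂ) • w := by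
    set T : EuclideanSpace ℂ (Fin d) →ₗ[ℂ] EuclideanSpace ℂ (Fin d) :=
      { toFun := fun w => ∑ n, ⟪x n, w⟫ • x n
        map_add' := by
          intro u v
          simp [inner_add_right, add_smul, Finset.sum_add_distrib]
        map_smul' := by
          intro c u
          simp [inner_smul_right, smul_smul, Finset.smul_sum] } with hTdef
    have h0 : T - (A : ℂ) • LinearMap.id = 0 := by
      rw [← inner_map_self_eq_zero]
      intro v
      simp only [LinearMap.sub_apply, LinearMap.smul_apply, LinearMap.id_apply, inner_sub_left,
        inner_smul_left]
      rw [sub_eq_zero]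
      have hTv : ⟪T v, v⟫ = ∑ n, ((‖⟪x n, v⟫‖ : ℂ)) ^ 2 := by
        rw [hTdef]
        simp only [LinearMap.coe_mk, AddHom.coe_mk]
        rw [sum_inner]
        refine Finset.sum_congr rfl fun n _ => ?_
        rw [inner_smul_left, RCLike.conj_mul]
        norm_cast
      rw [hTv, inner_self_eq_norm_sq_to_K]
      have hc := congrArg (Complex.ofReal) (ht v)
      push_cast at hc ⊢
      rw [hc, Complex.conj_ofReal]
      norm_num
    have hT : T = (A : ℂ) • LinearMap.id := sub_eq_zero.mp h0
    intro w
    exact LinearMap.ext_iff.mp hT w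
  -- Step 2 : the shift operator L and its unitarity
  set L : EuclideanSpace ℂ (Fin d) →ₗ[ℂ] EuclideanSpace ℂ (Fin d) := m.flip (x 1) with hLdef
  have hL : ∀ a, L (x a) = x (a + 1) := fun a => hm a 1
  have hiso : ∀ v w : EuclideanSpace ℂ (Fin d), ⟪L v, L w⟫ = ⟪v, w⟫ := by
    set Ld := LinearMap.adjoint L with hLd
    have h1 : ∀ v, L (Ld v) = v := by
      intro v
      have e1 : (A : ℂ) • L (Ld v) = (A : ℂ) • v := by
        calc (A : ℂ) • L (Ld v) = L ((A : ℂ) • Ld v) := (map_smul L _ _).symm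
          _ = L (∑ n, ⟪x n, Ld v⟫ • x n) := by rw [hS]
          _ = ∑ n, ⟪x n, Ld v⟫ • L (x n) := by rw [map_sum]; simp [map_smul]
          _ = ∑ n, ⟪x (n + 1), v⟫ • x (n + 1) := by
              refine Finset.sum_congr rfl fun n _ => ?_
              rw [hL, hLd, LinearMap.adjoint_inner_right, hL]
          _ = ∑ n, ⟪x n, v⟫ • x n :=
              Fintype.sum_equiv (Equiv.addRight (1 : ZMod N)) _ _ (fun n => rfl)
          _ = (A : ℂ) • v := hS v
      exact smul_right_injective _ hA' e1
    have hcomp : L * Ld = 1 := LinearMap.ext h1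
    have hcomp' : Ld * L = 1 := mul_eq_one_comm.mp hcomp
    intro v w
    have h2 : Ld (L w) = w := LinearMap.ext_iff.mp hcomp' w
    conv_rhs => rw [← h2]
    exact (LinearMap.adjoint_inner_right L v (L w)).symm
  -- Step 3 : Fourier vectors
  set v : ZMod N → EuclideanSpace ℂ (Fin d) :=
    fun k => ∑ b, zchar N (-(k * b)) • x b with hvdef
  have hLv : ∀ k, L (v k) = zchar N k • v k := by
    intro k
    rw [hvdef]
    simp only []
    rw [map_sum]
    simp only [map_smul, hL]
    rw [Finset.smul_sum]
    calc ∑ a, zchar N (-(k * a)) • x (a + 1)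
        = ∑ a, zchar N (-(k * (a - 1))) • x a :=
          Fintype.sum_equiv (Equiv.addRight (1 : ZMod N)) _ _ (fun a => by
            simp only [Equiv.coe_addRight, add_sub_cancel_right])
      _ = ∑ a, zchar N k • zchar N (-(k * a)) • x a := by
          refine Finset.sum_congr rfl fun a _ => ?_
          rw [smul_smul, ← zchar_add]
          ring_nf
  -- orthogonality
  have horth : ∀ k l : ZMod N, k ≠ l → ⟪v k, v l⟫ = 0 := by
    intro k l hkl
    have h := hiso (v k) (v l)
    rw [hLv, hLv, inner_smul_left, inner_smul_right, ← zchar_neg, ← mul_assoc, ← zchar_add] at h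
    have hne : zchar N (-k + l) ≠ 1 := zchar_ne_one N (by
      intro h0
      apply hkl
      linear_combination -h0)
    by_contra h0
    exact hne (mul_right_cancel₀ h0 (by rw [h, one_mul]))
  -- inversion
  have hinv : ∀ a, ∑ k, zchar N (k * a) • v k = (N : ℂ) • x a := by
    intro a
    have step : ∑ k, zchar N (k * a) • v k = ∑ b, (∑ k, zchar N (k * (a - b))) • x b := by
      simp only [hvdef, Finset.smul_sum]
      rw [Finset.sum_comm]
      refine Finset.sum_congr rfl fun b _ => ?_
      rw [Finset.sum_smul]
      refine Finset.sum_congr rfl fun k _ => ?_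
      rw [smul_smul, ← zchar_add]
      ring_nf
    rw [step, Finset.sum_eq_single a]
    · simp only [sub_self, mul_zero, zchar_zero]
      simp [Finset.card_univ, ZMod.card]
    · intro b _ hba
      have hab : a - b ≠ 0 := sub_ne_zero.mpr (Ne.symm hba)
      have hz : ∑ k : ZMod N, zchar N (k * (a - b)) = 0 := by
        rw [← zchar_sum N hab]
        exact Finset.sum_congr rfl fun k _ => by rw [mul_comm]
      rw [hz, zero_smul]
    · intro h
      exact absurd (Finset.mem_univ a) h
  -- inner products with Fourier vectors
  have hxv : ∀ (a k : ZMod N),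
      ⟪x a, v k⟫ = (N : ℂ)⁻¹ * (starRingEnd ℂ) (zchar N (k * a)) * ⟪v k, v k⟫ := by
    intro a k
    have h1 : ⟪∑ l, zchar N (l * a) • v l, v k⟫ = (N : ℂ) * ⟪x a, v k⟫ := by
      rw [hinv a, inner_smul_left, Complex.conj_natCast]
    have h2 : ⟪∑ l, zchar N (l * a) • v l, v k⟫
        = (starRingEnd ℂ) (zchar N (k * a)) * ⟪v k, v k⟫ := by
      rw [sum_inner, Finset.sum_eq_single k]
      · rw [inner_smul_left]
      · intro l _ hlk
        rw [inner_smul_left, horth l k hlk, mul_zero]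
      · intro h; exact absurd (Finset.mem_univ k) h
    have h3 : (N:ℂ) * ⟪x a, v k⟫ = (starRingEnd ℂ) (zchar N (k * a)) * ⟪v k, v k⟫ := by
      rw [← h1, h2]
    field_simp
    linear_combination h3
  -- norms of nonzero Fourier vectors
  have hnormsq : ∀ k, v k ≠ 0 → ‖v k‖ ^ 2 = A * N := by
    intro k hk
    have hnrm : ∀ a, ‖⟪x a, v k⟫‖ = (N:ℝ)⁻¹ * ‖v k‖ ^ 2 := by
      intro a
      rw [hxv a k, inner_self_eq_norm_sq_to_K (𝕜 := ℂ)]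
      rw [norm_mul, norm_mul, norm_inv, RCLike.norm_conj, zchar_norm, mul_one]
      simp [norm_pow, Complex.norm_real, abs_of_nonneg (norm_nonneg _)]
    have hsum := ht (v k)
    rw [Finset.sum_congr rfl (fun a _ => by rw [hnrm a])] at hsum
    rw [Finset.sum_const, Finset.card_univ, ZMod.card, nsmul_eq_mul] at hsum
    have hs : (0:ℝ) < ‖v k‖ := norm_pos_iff.mpr hk
    have hvk : (0:ℝ) < ‖v k‖ ^ 2 := by positivity
    have this1 : (N:ℝ) * ((N:ℝ)⁻¹ * ‖v k‖ ^ 2) ^ 2 = A * ‖v k‖ ^ 2 := hsum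
    have key : (N:ℝ)⁻¹ * ‖v k‖ ^ 2 * (‖v k‖ ^ 2 - A * N) = 0 := by
      field_simp at this1 ⊢
      nlinarith [this1]
    rcases mul_eq_zero.mp key with h | h
    · exact absurd h (by positivity)
    · linarith
  -- Step 4 : orthonormal basis
  have hAN : (0:ℝ) < Real.sqrt (A * N) := Real.sqrt_pos.mpr (by positivity)
  set c₀ : ℂ := ((Real.sqrt (A * N) : ℝ) : ℂ)⁻¹ with hc₀
  have hinnvv : ∀ k, v k ≠ 0 → ⟪v k, v k⟫ = ((A * N : ℝ) : ℂ) := by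
    intro k hk
    rw [inner_self_eq_norm_sq_to_K (𝕜 := ℂ), ← hnormsq k hk]
    norm_num
  set u : {k : ZMod N // v k ≠ 0} → EuclideanSpace ℂ (Fin d) :=
    fun k => c₀ • v k.val with hu
  have hon : Orthonormal ℂ u := by
    rw [orthonormal_iff_ite]
    intro i j
    rw [hu]
    simp only []
    rw [inner_smul_left, inner_smul_right, hc₀, map_inv₀, Complex.conj_ofReal]
    by_cases hij : i = j
    · subst hij
      rw [hinnvv i.val i.prop, if_pos rfl]
      have hr : (Real.sqrt (A * N))⁻¹ * ((Real.sqrt (A * N))⁻¹ * (A * N)) = 1 := by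
        rw [← Real.mul_self_sqrt (show (0:ℝ) ≤ A * N by positivity)]
        field_simp
        rw [Real.sqrt_sq (Real.sqrt_nonneg _)]
      exact_mod_cast hr
    · rw [horth i.val j.val (fun h => hij (Subtype.ext h))]
      simp [hij]
  have hsp : ⊤ ≤ Submodule.span ℂ (Set.range u) := by
    intro w _
    have hx : ∀ a, x a ∈ Submodule.span ℂ (Set.range u) := by
      intro a
      have : x a = (N : ℂ)⁻¹ • ∑ k, zchar N (k * a) • v k := by
        rw [hinv a, smul_smul, inv_mul_cancel₀ hNc, one_smul]
      rw [this]
      refine Submodule.smul_mem _ _ (Submodule.sum_mem _ fun k _ => ?_)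
      by_cases hk : v k = 0
      · rw [hk, smul_zero]; exact Submodule.zero_mem _
      · refine Submodule.smul_mem _ _ ?_
        have : v k = ((Real.sqrt (A * N) : ℝ) : ℂ) • u ⟨k, hk⟩ := by
          rw [hu]
          simp only []
          rw [smul_smul, hc₀, mul_inv_cancel₀, one_smul]
          exact_mod_cast hAN.ne'
        rw [this]
        exact Submodule.smul_mem _ _ (Submodule.subset_span ⟨⟨k, hk⟩, rfl⟩)
    have : w = (A : ℂ)⁻¹ • ∑ n, ⟪x n, w⟫ • x n := by
      rw [hS w, smul_smul, inv_mul_cancel₀ hA', one_smul]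
    rw [this]
    exact Submodule.smul_mem _ _ (Submodule.sum_mem _ fun n _ =>
      Submodule.smul_mem _ _ (hx n))
  set B : OrthonormalBasis {k : ZMod N // v k ≠ 0} ℂ (EuclideanSpace ℂ (Fin d)) :=
    OrthonormalBasis.mk hon hsp with hB
  have hcard : Fintype.card {k : ZMod N // v k ≠ 0} = d := by
    have h1 := Module.finrank_eq_card_basis B.toBasis
    rw [finrank_euclideanSpace_fin] at h1
    omega
  set eqv : Fin d ≃ {k : ZMod N // v k ≠ 0} := (Fintype.equivFinOfCardEq hcard).symm with heqv
  set B' : OrthonormalBasis (Fin d) ℂ (EuclideanSpace ℂ (Fin d)) := B.reindex eqv.symm with hB'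
  refine ⟨B'.repr, Real.sqrt (A * N) / A, fun j => (eqv j).val, by positivity,
    Subtype.val_injective.comp eqv.injective, ?_⟩
  intro a j
  set k : ZMod N := (eqv j).val with hkd
  have hk : v k ≠ 0 := (eqv j).prop
  have happ : B'.repr (x a) j = ⟪u (eqv j), x a⟫ := by
    rw [OrthonormalBasis.repr_apply_apply, hB', OrthonormalBasis.reindex_apply, Equiv.symm_symm,
      hB, OrthonormalBasis.coe_mk]
  have hvx : ⟪v k, x a⟫ = (N : ℂ)⁻¹ * zchar N (k * a) * ((A * N : ℝ) : ℂ) := by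
    rw [← inner_conj_symm, hxv a k, hinnvv k hk]
    rw [map_mul, map_mul, Complex.conj_inv, Complex.conj_natCast, Complex.conj_conj,
      Complex.conj_ofReal]
  have hscal : ((Real.sqrt (A * N) / A : ℝ) : ℂ) * (c₀ * ((N : ℂ)⁻¹ * ((A * N : ℝ) : ℂ))) = 1 := by
    rw [hc₀]
    rw [← Complex.ofReal_inv, ← Complex.ofReal_natCast]
    rw [← Complex.ofReal_inv, ← Complex.ofReal_mul, ← Complex.ofReal_mul, ← Complex.ofReal_mul]
    norm_cast
    field_simp
  have hzch : Complex.exp (2 * Real.pi * Complex.I * (a.val : ℂ) * ((k).val : ℂ) / (N : ℂ))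
      = zchar N (k * a) := by
    have h1 := zchar_nat N (a.val * k.val)
    have h2 : ((a.val * k.val : ℕ) : ZMod N) = k * a := by
      push_cast [ZMod.natCast_val, ZMod.cast_id]
      ring
    rw [h2] at h1
    rw [← h1]
    push_cast
    ring_nf
  show ((Real.sqrt (A * N) / A : ℝ) : ℂ) • (B'.repr (x a)) j = _
  have : ((Real.sqrt (A * N) / A : ℝ) : ℂ) • (B'.repr (x a)) j
      = ((Real.sqrt (A * N) / A : ℝ) : ℂ) * (B'.repr (x a) j) := rfl
  rw [this, happ, hu]
  simp only []
  rw [inner_smul_left, hc₀, map_inv₀, Complex.conj_ofReal, ← hc₀, ← hkd, hvx]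
  rw [hzch]
  calc ((Real.sqrt (A * N) / A : ℝ) : ℂ) * (c₀ * ((N : ℂ)⁻¹ * zchar N (k * a) * ((A * N : ℝ) : ℂ)))
      = (((Real.sqrt (A * N) / A : ℝ) : ℂ) * (c₀ * ((N : ℂ)⁻¹ * ((A * N : ℝ) : ℂ)))) * zchar N (k * a) := by ring
    _ = zchar N (k * a) := by rw [hscal, one_mul]
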